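/- Let X be a nonempty finite set and R a family of subsets of X. Let ν > 0 and 0 < α < 1/4. If a nonempty subset Z ⊆ X is a (ν,α)-sample for (X,R), then Z is a relative (ν,4α)-approximation for (X,R). -/

import Mathlib

/-- The measure of a range `r` in a finite set `Z`: `|Z ∩ r| / |Z|`. -/
noncomputable def meas {γ : Type*} (r : Set γ) (Z : Finset γ) : ℝ :=
  (((↑Z : Set γ) ∩ r).ncard : ℝ) / (Z.card : ℝ)

/-- The distance `d_ν(a,b) = |a − b| / (a + b + ν)`. -/
noncomputable def dnu (ν a b : ℝ) : ℝ := |a - b| / (a + b + ν)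

/-- If a nonempty `Z ⊆ X` is a `(ν,α)`-sample for `(X,R)` with `ν > 0` and
`0 < α < 1/4`, then `Z` is a relative `(ν,4α)`-approximation for `(X,R)`. -/
theorem sample_to_relative_approx {γ : Type*} (X : Finset γ) (hX : X.Nonempty)
    (R : Set (Set γ)) (ν α : ℝ) (hν : 0 < ν) (hα0 : 0 < α) (hα : α < 1 / 4)
    (Z : Finset γ) (hZX : Z ⊆ X) (hZ : Z.Nonempty)
    (hsample : ∀ r ∈ R, dnu ν (meas r Z) (meas r X) < α) :
    ∀ r ∈ R,
      (ν ≤ meas r X →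
        (1 - 4 * α) * meas r X ≤ meas r Z ∧ meas r Z ≤ (1 + 4 * α) * meas r X) ∧
      (meas r X ≤ ν → |meas r Z - meas r X| ≤ (4 * α) * ν) := by
  intro r hr
  have h := hsample r hr
  have ha : (0:ℝ) ≤ meas r Z := div_nonneg (Nat.cast_nonneg _) (Nat.cast_nonneg _)
  have hb : (0:ℝ) ≤ meas r X := div_nonneg (Nat.cast_nonneg _) (Nat.cast_nonneg _)
  set a := meas r Z with hadef
  set b := meas r X with hbdef
  have hden : 0 < a + b + ν := by linarith
  have h' : |a - b| < α * (a + b + ν) := by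
    rw [dnu, div_lt_iff₀ hden] at h; exact h
  rcases le_or_gt a b with hab | hab
  · rw [abs_of_nonpos (by linarith)] at h'
    refine ⟨fun hνb => ⟨by nlinarith, by nlinarith⟩, fun hbν => ?_⟩
    rw [abs_of_nonpos (by linarith)]
    nlinarith
  · rw [abs_of_pos (by linarith)] at h'
    refine ⟨fun hνb => ⟨by nlinarith, by nlinarith⟩, fun hbν => ?_⟩
    rw [abs_of_pos (by linarith)]
    nlinarith
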